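/- The radius 1/3 in Bohr's inequality is optimal: for every r with 1/3 < r < 1 there exists an analytic function f on the unit disk with |f| ≤ 1 whose Taylor coefficients a_n satisfy ∑_{n=0}^∞ |a_n| r^n > 1. Specifically, for a ∈ (0,1) sufficiently close to 1, the function f(z) = (a − z)/(1 − a z) has this property. -/

import Mathlib

open Metric

/-- Sharpness of the Bohr radius 1/3: for every `1/3 < r < 1` there is `a ∈ (0,1)` such that
the disk automorphism `f(z) = (a - z)/(1 - a z)` (which is analytic and bounded by 1 on the
unit disk) has Taylor coefficients `cₙ` with `∑ |cₙ| rⁿ > 1`. -/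
theorem bohr_radius_sharp (r : ℝ) (hr : 1 / 3 < r) (hr1 : r < 1) :
    ∃ a : ℝ, a ∈ Set.Ioo (0 : ℝ) 1 ∧
      ∃ c : ℕ → ℂ,
        (∀ z ∈ ball (0 : ℂ) 1,
            HasSum (fun n => c n * z ^ n) ((a - z) / (1 - a * z))) ∧
        (∀ z ∈ ball (0 : ℂ) 1, ‖(a - z) / (1 - a * z)‖ ≤ 1) ∧
        1 < ∑' n, ‖c n‖ * r ^ n := by
  have hr0 : 0 < r := lt_trans (by norm_num) hr
  have h1r : 1 < 1 / r := (one_lt_div hr0).2 hr1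
  have h3r : 1 / r < 3 := by rw [div_lt_iff₀ hr0]; linarith
  obtain ⟨a, ha0, ha1, hkey⟩ : ∃ a : ℝ, 0 < a ∧ a < 1 ∧ 1 < r * (1 + 2 * a) := by
    refine ⟨((1 / r - 1) / 2 + 1) / 2, by linarith, by linarith, ?_⟩
    have h : 1 + 2 * (((1 / r - 1) / 2 + 1) / 2) = (1 / r + 3) / 2 := by ring
    rw [h]
    have h2 : r * ((1 / r + 3) / 2) = (1 + 3 * r) / 2 := by field_simp
    rw [h2]; linarith
  have ha2 : (0 : ℝ) < 1 - a ^ 2 := by nlinarith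
  set c : ℕ → ℂ := fun n => if n = 0 then (a : ℂ) else -((1 : ℂ) - (a : ℂ) ^ 2) * (a : ℂ) ^ (n - 1) with hc
  refine ⟨a, ⟨ha0, ha1⟩, c, ?_, ?_, ?_⟩
  · intro z hz
    rw [mem_ball_zero_iff] at hz
    have haz : ‖(a : ℂ) * z‖ < 1 := by
      rw [norm_mul, Complex.norm_real, Real.norm_eq_abs, abs_of_pos ha0]
      nlinarith [norm_nonneg z]
    have hne : (1 : ℂ) - (a : ℂ) * z ≠ 0 := by
      intro h
      have h1 : (a : ℂ) * z = 1 := by linear_combination -h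
      rw [h1] at haz; simp at haz
    have hgeo := (hasSum_geometric_of_norm_lt_one haz).mul_left (-((1 : ℂ) - (a : ℂ) ^ 2) * z)
    have h2 : HasSum (fun n => c (n + 1) * z ^ (n + 1))
        (-((1 : ℂ) - (a : ℂ) ^ 2) * z * ((1 : ℂ) - (a : ℂ) * z)⁻¹) := by
      convert hgeo using 1
      · rfl
      funext n
      simp only [hc, Nat.add_sub_cancel, if_neg (Nat.succ_ne_zero n)]
      rw [mul_pow]; ring
    have heq : -((1 : ℂ) - (a : ℂ) ^ 2) * z * ((1 : ℂ) - (a : ℂ) * z)⁻¹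
        = ((a : ℂ) - z) / ((1 : ℂ) - (a : ℂ) * z) - ∑ i ∈ Finset.range 1, c i * z ^ i := by
      simp only [Finset.sum_range_one, pow_zero, mul_one, hc, ↓reduceIte]
      field_simp
      ring
    rw [heq] at h2
    exact (hasSum_nat_add_iff' 1).1 h2
  · intro z hz
    rw [mem_ball_zero_iff] at hz
    have hz2 : z.re ^ 2 + z.im ^ 2 < 1 := by
      have h1 := Complex.sq_norm z
      rw [Complex.normSq_apply] at h1
      nlinarith [norm_nonneg z]
    rw [norm_div, div_le_one_iff]
    rcases eq_or_ne ((1 : ℂ) - (a : ℂ) * z) 0 with h0 | h0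
    · exfalso
      have h1 : (a : ℂ) * z = 1 := by linear_combination -h0
      have h2 := congrArg norm h1
      rw [norm_mul, Complex.norm_real, Real.norm_eq_abs, abs_of_pos ha0, norm_one] at h2
      nlinarith [norm_nonneg z, Complex.sq_norm z, Complex.normSq_apply z]
    · left
      refine ⟨norm_pos_iff.mpr h0, ?_⟩
      have hsq : (‖((a : ℂ) - z)‖) ^ 2 ≤ (‖((1 : ℂ) - (a : ℂ) * z)‖) ^ 2 := by
        rw [Complex.sq_norm, Complex.sq_norm, Complex.normSq_apply, Complex.normSq_apply]
        simp only [Complex.sub_re, Complex.sub_im, Complex.mul_re, Complex.mul_im,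
          Complex.ofReal_re, Complex.ofReal_im, Complex.one_re, Complex.one_im]
        nlinarith [hz2, ha2, mul_nonneg ha2.le (by nlinarith : (0:ℝ) ≤ 1 - z.re ^ 2 - z.im ^ 2)]
      nlinarith [norm_nonneg ((a : ℂ) - z), norm_nonneg ((1 : ℂ) - (a : ℂ) * z)]
  · have har : a * r < 1 := by nlinarith
    have har0 : 0 ≤ a * r := by positivity
    have hcabs : ∀ n, ‖c (n + 1)‖ = (1 - a ^ 2) * a ^ n := by
      intro n
      simp only [hc, if_neg (Nat.succ_ne_zero n), Nat.add_sub_cancel]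
      rw [norm_mul, norm_neg, norm_pow, Complex.norm_real, Real.norm_eq_abs, abs_of_pos ha0,
        show (1 : ℂ) - (a : ℂ) ^ 2 = (((1 - a ^ 2 : ℝ)) : ℂ) by push_cast; ring,
        Complex.norm_real, Real.norm_eq_abs, abs_of_pos ha2]
    have hgeo := (hasSum_geometric_of_lt_one har0 har).mul_left ((1 - a ^ 2) * r)
    have h2 : HasSum (fun n => ‖c (n + 1)‖ * r ^ (n + 1))
        ((1 - a ^ 2) * r * (1 - a * r)⁻¹) := by
      convert hgeo using 1
      · rfl
      funext n
      rw [hcabs n, mul_pow, pow_succ]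
      ring
    have hS : HasSum (fun n => ‖c n‖ * r ^ n)
        ((1 - a ^ 2) * r * (1 - a * r)⁻¹ + a) := by
      have h3 := (hasSum_nat_add_iff (f := fun n => ‖c n‖ * r ^ n) (g := (1 - a ^ 2) * r * (1 - a * r)⁻¹) 1).1 h2
      have h4 : ∑ i ∈ Finset.range 1, ‖c i‖ * r ^ i = a := by
        simp [hc, abs_of_pos ha0]
      rwa [h4] at h3
    rw [hS.tsum_eq]
    have har1 : 0 < 1 - a * r := by linarith
    have hdiv : (1 - a ^ 2) * r * (1 - a * r)⁻¹ = ((1 - a ^ 2) * r) / (1 - a * r) :=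
      (div_eq_mul_inv _ _).symm
    rw [hdiv]
    have key2 : 1 - a < ((1 - a ^ 2) * r) / (1 - a * r) := by
      rw [lt_div_iff₀ har1]
      nlinarith
    linarith
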